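/- Let γ₁, γ₂ be positive reals with 0 < γ₁ < 1 < γ₁ + γ₂, and let Ψ : ℝ₊ × ℝ₊ → ℝ satisfy liminf_{x→(0,0)} Ψ(x) ≥ 0 and γ₁Ψ(x) + γ₂Ψ(y) ≤ Ψ(γ₁x + γ₂y) for all x, y in the open positive quadrant. Then Ψ is positively homogeneous: Ψ(γx) = γΨ(x) for all γ > 0 and x in the positive quadrant. -/

import Mathlib

set_option maxHeartbeats 1000000 in
/-- Key 1-D lemma: a function on the positive reals satisfying the mixing
superinequality, `liminf ≥ 0` at `0`, and vanishing at `1`, is nonnegative. -/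
private lemma key1 (γ₁ γ₂ : ℝ) (hγ₁ : 0 < γ₁) (hγ₁1 : γ₁ < 1) (hγ₂ : 0 < γ₂)
    (hsum : 1 < γ₁ + γ₂) (φ : ℝ → ℝ)
    (hmix : ∀ a b : ℝ, 0 < a → 0 < b → γ₁ * φ a + γ₂ * φ b ≤ φ (γ₁ * a + γ₂ * b))
    (hlim : ∀ ε : ℝ, 0 < ε → ∃ δ : ℝ, 0 < δ ∧ ∀ t : ℝ, 0 < t → t < δ → -ε < φ t)
    (hone : φ 1 = 0) :
    ∀ γ : ℝ, 0 < γ → 0 ≤ φ γ := by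
  set s := γ₁ + γ₂ with hs_def
  have hs1 : 1 < s := hsum
  have hs0 : 0 < s := by linarith
  -- scaling up by s
  have up : ∀ t : ℝ, 0 < t → s * φ t ≤ φ (s * t) := by
    intro t ht
    have h := hmix t t ht ht
    have e1 : γ₁ * t + γ₂ * t = s * t := by rw [hs_def]; ring
    have e2 : γ₁ * φ t + γ₂ * φ t = s * φ t := by rw [hs_def]; ring
    rw [e1] at h; linarith
  have hpow : ∀ q : ℕ, 0 ≤ φ (s ^ q) := by
    intro q; induction q with
    | zero => simp [hone]
    | succ q ih =>
      have hq0 : (0:ℝ) < s ^ q := by positivity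
      have h := up _ hq0
      have e : s * s ^ q = s ^ (q + 1) := by ring
      rw [e] at h
      nlinarith
  -- linear lower bounds
  set Good : ℝ → Prop := fun C => ∃ y₀ : ℝ, 0 < y₀ ∧ ∀ y : ℝ, y₀ ≤ y → -(C * y) ≤ φ y
    with hGood_def
  -- initial linear lower bound
  obtain ⟨δ₁, hδ₁0, hδ₁⟩ := hlim 1 one_pos
  have hG1 : Good (s / δ₁) := by
    have hC0 : (0:ℝ) < s / δ₁ := by positivity
    have claim : ∀ k : ℕ, ∀ y : ℝ, δ₁ / s ≤ y → y < δ₁ * s ^ k → -((s / δ₁) * y) ≤ φ y := by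
      intro k
      induction k with
      | zero =>
        intro y hy1 hy2
        simp only [pow_zero, mul_one] at hy2
        have hy0 : 0 < y := lt_of_lt_of_le (by positivity) hy1
        have h1 := hδ₁ y hy0 hy2
        have h2 : (1:ℝ) ≤ (s / δ₁) * y := by
          have := mul_le_mul_of_nonneg_left hy1 hC0.le
          rwa [div_mul_div_comm, mul_comm δ₁ s, div_self (by positivity)] at this
        linarith
      | succ k ih =>
        intro y hy1 hy2
        by_cases hcase : y < δ₁ * s ^ k
        · exact ih y hy1 hcase
        · push_neg at hcase
          have hsk1 : (1:ℝ) ≤ s ^ k := one_le_pow₀ hs1.le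
          have hδy : δ₁ ≤ y := by nlinarith
          have ht1 : δ₁ / s ≤ y / s := by gcongr
          have ht0 : 0 < y / s := lt_of_lt_of_le (by positivity) ht1
          have ht2 : y / s < δ₁ * s ^ k := by
            rw [div_lt_iff₀ hs0]
            calc y < δ₁ * s ^ (k + 1) := hy2
            _ = δ₁ * s ^ k * s := by ring
          have hφt := ih (y / s) ht1 ht2
          have hup := up (y / s) ht0
          rw [mul_div_cancel₀ y (ne_of_gt hs0)] at hup
          have h5 := mul_le_mul_of_nonneg_left hφt hs0.le
          have e5 : s * -(s / δ₁ * (y / s)) = -(s / δ₁ * y) := by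
            field_simp
          linarith
    refine ⟨δ₁ / s, by positivity, fun y hy => ?_⟩
    obtain ⟨k, hk⟩ := pow_unbounded_of_one_lt (y / δ₁) hs1
    refine claim k y hy ?_
    rw [div_lt_iff₀ hδ₁0] at hk
    linarith [hk]
  -- improvement step
  have hG2 : ∀ C : ℝ, 0 ≤ C → Good C → Good (C * (1 - 1 / (2 * s))) := by
    intro C hC ⟨y₀, hy₀, hG⟩
    refine ⟨max (2 * γ₂ * y₀) (γ₁ + γ₂ * y₀ + 1), by positivity, fun y hy => ?_⟩
    have hy1 : 2 * γ₂ * y₀ ≤ y := le_trans (le_max_left _ _) hy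
    have hy2 : γ₁ + γ₂ * y₀ + 1 ≤ y := le_trans (le_max_right _ _) hy
    have hU1 : (1:ℝ) ≤ (y - γ₂ * y₀) / γ₁ := by
      rw [le_div_iff₀ hγ₁]; linarith
    obtain ⟨q, hq1, hq2⟩ := exists_nat_pow_near hU1 hs1
    set P := s ^ q with hP_def
    have hP0 : (0:ℝ) < P := by positivity
    set b := (y - γ₁ * P) / γ₂ with hb_def
    have hγ₁P : γ₁ * P ≤ y - γ₂ * y₀ := by
      rw [le_div_iff₀ hγ₁] at hq1; linarith [hq1]
    have hb1 : y₀ ≤ b := by rw [hb_def, le_div_iff₀ hγ₂]; linarith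
    have hb0 : 0 < b := lt_of_lt_of_le hy₀ hb1
    have hmixPb := hmix P b hP0 hb0
    have hey : γ₁ * P + γ₂ * b = y := by rw [hb_def]; field_simp; ring
    rw [hey] at hmixPb
    have hφP := hpow q
    have hφb := hG b hb1
    -- lower bound on P from hq2
    have hPlow : (y - γ₂ * y₀) / s < γ₁ * P := by
      rw [div_lt_iff₀ hs0]
      have : (y - γ₂ * y₀) / γ₁ < P * s := by
        calc (y - γ₂ * y₀) / γ₁ < s ^ (q + 1) := hq2
        _ = P * s := by rw [hP_def]; ring
      rw [div_lt_iff₀ hγ₁] at this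
      nlinarith
    have hkey : φ y ≥ -(C * (γ₂ * b)) := by nlinarith
    have hb2 : γ₂ * b = y - γ₁ * P := by rw [hb_def]; field_simp
    have hfin : C * (γ₂ * b) ≤ C * (1 - 1 / (2 * s)) * y := by
      rw [hb2]
      have h3 : y - γ₁ * P < y - (y - γ₂ * y₀) / s := by linarith
      have hkey2 : (1 - 1 / (2 * s)) * y - (y - (y - γ₂ * y₀) / s)
          = (y - 2 * γ₂ * y₀) / (2 * s) := by
        field_simp; ring
      have h5 : 0 ≤ (y - 2 * γ₂ * y₀) / (2 * s) := by
        apply div_nonneg _ (by positivity); linarith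
      have h4 : y - (y - γ₂ * y₀) / s ≤ (1 - 1 / (2 * s)) * y := by linarith
      calc C * (y - γ₁ * P) ≤ C * ((1 - 1 / (2 * s)) * y) := by nlinarith
      _ = C * (1 - 1 / (2 * s)) * y := by ring
    linarith
  -- iterate improvement
  set θ : ℝ := 1 - 1 / (2 * s) with hθ_def
  have hθ0 : 0 < θ := by
    rw [hθ_def, sub_pos, div_lt_one (by positivity)]; linarith
  have hθ1 : θ < 1 := by
    rw [hθ_def]; have : 0 < 1 / (2 * s) := by positivity
    linarith
  have hGk : ∀ k : ℕ, Good (s / δ₁ * θ ^ k) := by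
    intro k; induction k with
    | zero => simpa using hG1
    | succ k ih =>
      have h := hG2 _ (by positivity) ih
      have e : s / δ₁ * θ ^ k * θ = s / δ₁ * θ ^ (k + 1) := by ring
      rwa [e] at h
  -- main argument : suppose φ γ < 0
  intro γ hγ
  by_contra hneg
  push_neg at hneg
  set c : ℝ := -φ γ with hc_def
  have hc0 : 0 < c := by rw [hc_def]; linarith
  set ρ : ℝ := (1 + γ₁) / (2 * γ₁) with hρ_def
  have hρ1 : 1 < ρ := by rw [hρ_def, lt_div_iff₀ (by positivity)]; linarith
  have hρ0 : 0 < ρ := by linarith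
  set σ : ℝ := c / (2 * γ) with hσ_def
  have hσ0 : 0 < σ := by positivity
  set ε : ℝ := c * (1 - 1 / ρ) / (2 * γ₂) with hε_def
  have hr1 : 1 / ρ < 1 := by rw [div_lt_one hρ0]; exact hρ1
  have hr0 : 0 < 1 / ρ := by positivity
  have hε0 : 0 < ε := by
    rw [hε_def]
    have : 0 < 1 - 1 / ρ := by linarith
    positivity
  obtain ⟨δ, hδ0, hδ⟩ := hlim ε hε0
  -- amplification invariant
  have Inv : ∀ m : ℕ, ∃ a : ℝ, 0 < a ∧ γ * ρ ^ m ≤ a ∧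
      φ a ≤ -(σ * (1 + (1 / ρ) ^ m) * a) := by
    intro m; induction m with
    | zero =>
      refine ⟨γ, hγ, by simp, ?_⟩
      have h0 : σ * (1 + (1 / ρ) ^ 0) * γ = c := by
        rw [pow_zero, hσ_def]; field_simp; ring
      rw [h0, hc_def, neg_neg]
    | succ m ih =>
      obtain ⟨a, ha0, ham, haφ⟩ := ih
      set b : ℝ := min δ (a * (1 - γ₁) / γ₂) / 2 with hb_def
      have hbpos0 : 0 < a * (1 - γ₁) / γ₂ := by
        have : 0 < 1 - γ₁ := by linarith
        positivity
      have hb0 : 0 < b := by rw [hb_def]; positivity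
      have hbδ : b < δ := by
        rw [hb_def]
        calc min δ (a * (1 - γ₁) / γ₂) / 2 ≤ δ / 2 := by
              apply div_le_div_of_nonneg_right (min_le_left _ _)
              norm_num
        _ < δ := by linarith
      have hbγ₂ : γ₂ * b ≤ a * (1 - γ₁) / 2 := by
        rw [hb_def]
        have h1 : min δ (a * (1 - γ₁) / γ₂) ≤ a * (1 - γ₁) / γ₂ := min_le_right _ _
        have h2 : γ₂ * (a * (1 - γ₁) / γ₂) = a * (1 - γ₁) := by field_simp
        nlinarith
      set a' : ℝ := (a - γ₂ * b) / γ₁ with ha'_def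
      have hsub : a * (1 + γ₁) / 2 ≤ a - γ₂ * b := by linarith
      have ha'0 : 0 < a' := by
        rw [ha'_def]
        apply div_pos _ hγ₁
        nlinarith
      have hγ₁a' : γ₁ * a' = a - γ₂ * b := by rw [ha'_def]; field_simp
      have ha'ρ : γ * ρ ^ (m + 1) ≤ a' := by
        have h1 : a * ρ ≤ a' := by
          rw [ha'_def, le_div_iff₀ hγ₁, hρ_def]
          have : a * ((1 + γ₁) / (2 * γ₁)) * γ₁ = a * (1 + γ₁) / 2 := by field_simp
          rw [this]; exact hsub
        calc γ * ρ ^ (m + 1) = (γ * ρ ^ m) * ρ := by ring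
        _ ≤ a * ρ := by nlinarith
        _ ≤ a' := h1
      have hmixab := hmix a' b ha'0 hb0
      rw [hγ₁a'] at hmixab
      have hea : (a - γ₂ * b) + γ₂ * b = a := by ring
      rw [hea] at hmixab
      have hφb := hδ b hb0 hbδ
      have hstep : γ₁ * φ a' ≤ -(σ * (1 + (1 / ρ) ^ m) * a) + γ₂ * ε := by nlinarith
      refine ⟨a', ha'0, ha'ρ, ?_⟩
      -- need : φ a' ≤ -(σ * (1 + (1/ρ)^(m+1)) * a')
      have hcoef : 0 < σ * (1 + (1 / ρ) ^ (m + 1)) := by positivity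
      have hmono : σ * (1 + (1 / ρ) ^ (m + 1)) * (γ₁ * a') ≤
          σ * (1 + (1 / ρ) ^ (m + 1)) * a := by
        apply mul_le_mul_of_nonneg_left _ hcoef.le
        rw [hγ₁a']; nlinarith
      have hgap : γ₂ * ε ≤ σ * ((1 / ρ) ^ m - (1 / ρ) ^ (m + 1)) * a := by
        have e1 : γ₂ * ε = c * (1 - 1 / ρ) / 2 := by
          rw [hε_def]; field_simp
        have e2 : (1 / ρ) ^ m * ρ ^ m = 1 := by
          rw [one_div, inv_pow, inv_mul_cancel₀ (by positivity)]
        have e3 : (1 / ρ) ^ m - (1 / ρ) ^ (m + 1) = (1 / ρ) ^ m * (1 - 1 / ρ) := by ring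
        rw [e1, e3]
        have h4 : σ * ((1 / ρ) ^ m * (1 - 1 / ρ)) * (γ * ρ ^ m) ≤
            σ * ((1 / ρ) ^ m * (1 - 1 / ρ)) * a := by
          apply mul_le_mul_of_nonneg_left ham
          have : 0 < 1 - 1 / ρ := by linarith
          positivity
        have h5 : σ * ((1 / ρ) ^ m * (1 - 1 / ρ)) * (γ * ρ ^ m) = c * (1 - 1 / ρ) / 2 := by
          have : σ * ((1 / ρ) ^ m * (1 - 1 / ρ)) * (γ * ρ ^ m)
              = σ * γ * (1 - 1 / ρ) * ((1 / ρ) ^ m * ρ ^ m) := by ring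
          rw [this, e2, hσ_def]; field_simp
        linarith
      -- combine
      have final : γ₁ * φ a' ≤ γ₁ * (-(σ * (1 + (1 / ρ) ^ (m + 1)) * a')) := by
        have h6 : γ₁ * (-(σ * (1 + (1 / ρ) ^ (m + 1)) * a'))
            = -(σ * (1 + (1 / ρ) ^ (m + 1)) * (γ₁ * a')) := by ring
        rw [h6]
        have h7 : -(σ * (1 + (1 / ρ) ^ (m + 1)) * a) ≤
            -(σ * (1 + (1 / ρ) ^ (m + 1)) * (γ₁ * a')) := by linarith
        calc γ₁ * φ a' ≤ -(σ * (1 + (1 / ρ) ^ m) * a) + γ₂ * ε := hstep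
        _ ≤ -(σ * (1 + (1 / ρ) ^ (m + 1)) * a) := by nlinarith
        _ ≤ -(σ * (1 + (1 / ρ) ^ (m + 1)) * (γ₁ * a')) := h7
      exact le_of_mul_le_mul_left final hγ₁
  -- contradiction
  have hsd : (0:ℝ) < s / δ₁ := div_pos hs0 hδ₁0
  obtain ⟨k, hk⟩ := exists_pow_lt_of_lt_one (div_pos hσ0 hsd) hθ1
  obtain ⟨y₀, hy₀0, hGC⟩ := hGk k
  have hCσ : s / δ₁ * θ ^ k < σ := by
    have h := mul_lt_mul_of_pos_left hk hsd
    rwa [mul_div_cancel₀ σ (ne_of_gt hsd)] at h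
  obtain ⟨m, hm⟩ := pow_unbounded_of_one_lt (y₀ / γ) hρ1
  obtain ⟨a, ha0, ham, haφ⟩ := Inv m
  have hay : y₀ ≤ a := by
    rw [div_lt_iff₀ hγ] at hm
    nlinarith
  have hlow := hGC a hay
  have hθk0 : 0 < θ ^ k := pow_pos hθ0 k
  have hrm : 0 < (1 / ρ) ^ m := pow_pos hr0 m
  have hC : s / δ₁ * θ ^ k * a < σ * a := mul_lt_mul_of_pos_right hCσ ha0
  have hfin2 : 0 ≤ σ * (1 / ρ) ^ m * a := le_of_lt (mul_pos (mul_pos hσ0 hrm) ha0)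
  have hB : σ * a + σ * (1 / ρ) ^ m * a = σ * (1 + (1 / ρ) ^ m) * a := by ring
  linarith

/-- 1-D homogeneity lower bound. -/
private lemma key2 (γ₁ γ₂ : ℝ) (hγ₁ : 0 < γ₁) (hγ₁1 : γ₁ < 1) (hγ₂ : 0 < γ₂)
    (hsum : 1 < γ₁ + γ₂) (g : ℝ → ℝ)
    (hmix : ∀ a b : ℝ, 0 < a → 0 < b → γ₁ * g a + γ₂ * g b ≤ g (γ₁ * a + γ₂ * b))
    (hlim : ∀ ε : ℝ, 0 < ε → ∃ δ : ℝ, 0 < δ ∧ ∀ t : ℝ, 0 < t → t < δ → -ε < g t) :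
    ∀ γ : ℝ, 0 < γ → γ * g 1 ≤ g γ := by
  set φ : ℝ → ℝ := fun t => g t - t * g 1 with hφ_def
  have hφmix : ∀ a b : ℝ, 0 < a → 0 < b → γ₁ * φ a + γ₂ * φ b ≤ φ (γ₁ * a + γ₂ * b) := by
    intro a b ha hb
    have h := hmix a b ha hb
    simp only [hφ_def]
    nlinarith
  have hφlim : ∀ ε : ℝ, 0 < ε → ∃ δ : ℝ, 0 < δ ∧ ∀ t : ℝ, 0 < t → t < δ → -ε < φ t := by
    intro ε hε
    obtain ⟨δ, hδ0, hδ⟩ := hlim (ε / 2) (by positivity)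
    refine ⟨min δ (ε / (2 * (|g 1| + 1))), by positivity, fun t ht htlt => ?_⟩
    have h1 := hδ t ht (lt_of_lt_of_le htlt (min_le_left _ _))
    have h2 : t < ε / (2 * (|g 1| + 1)) := lt_of_lt_of_le htlt (min_le_right _ _)
    have h3 : t * g 1 ≤ t * |g 1| := by
      apply mul_le_mul_of_nonneg_left (le_abs_self _) ht.le
    have h4 : t * |g 1| < ε / 2 := by
      have habs : 0 ≤ |g 1| := abs_nonneg _
      rw [lt_div_iff₀ (by positivity : (0:ℝ) < 2 * (|g 1| + 1))] at h2
      nlinarith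
    simp only [hφ_def]
    linarith
  have hφone : φ 1 = 0 := by simp [hφ_def]
  intro γ hγ
  have h := key1 γ₁ γ₂ hγ₁ hγ₁1 hγ₂ hsum φ hφmix hφlim hφone γ hγ
  have h2 : 0 ≤ g γ - γ * g 1 := h
  linarith

theorem stmt_0 (γ₁ γ₂ : ℝ) (hγ₁ : 0 < γ₁) (hγ₁1 : γ₁ < 1) (hγ₂ : 0 < γ₂)
    (hsum : 1 < γ₁ + γ₂) (Ψ : ℝ × ℝ → ℝ)
    (hliminf : ∀ ε > 0, ∃ δ > 0, ∀ x₁ x₂ : ℝ, 0 < x₁ → x₁ < δ → 0 < x₂ → x₂ < δ →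
      -ε < Ψ (x₁, x₂))
    (hineq : ∀ x y : ℝ × ℝ, 0 < x.1 → 0 < x.2 → 0 < y.1 → 0 < y.2 →
      γ₁ * Ψ x + γ₂ * Ψ y ≤ Ψ (γ₁ • x + γ₂ • y)) :
    ∀ γ : ℝ, 0 < γ → ∀ x : ℝ × ℝ, 0 < x.1 → 0 < x.2 → Ψ (γ • x) = γ * Ψ x := by
  -- the ray lemma: for every positive point y, γ * Ψ y ≤ Ψ (γ • y)
  have ray : ∀ y : ℝ × ℝ, 0 < y.1 → 0 < y.2 → ∀ γ : ℝ, 0 < γ → γ * Ψ y ≤ Ψ (γ • y) := by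
    intro y hy1 hy2 γ hγ
    set g : ℝ → ℝ := fun t => Ψ (t • y) with hg_def
    have hgmix : ∀ a b : ℝ, 0 < a → 0 < b → γ₁ * g a + γ₂ * g b ≤ g (γ₁ * a + γ₂ * b) := by
      intro a b ha hb
      have h := hineq (a • y) (b • y) (by simpa [smul_eq_mul] using mul_pos ha hy1)
        (by simpa [smul_eq_mul] using mul_pos ha hy2)
        (by simpa [smul_eq_mul] using mul_pos hb hy1)
        (by simpa [smul_eq_mul] using mul_pos hb hy2)
      have e : γ₁ • a • y + γ₂ • b • y = (γ₁ * a + γ₂ * b) • y := by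
        rw [smul_smul, smul_smul, ← add_smul]
      rw [e] at h
      simpa [hg_def] using h
    have hglim : ∀ ε : ℝ, 0 < ε → ∃ δ : ℝ, 0 < δ ∧ ∀ t : ℝ, 0 < t → t < δ → -ε < g t := by
      intro ε hε
      obtain ⟨δ, hδ0, hδ⟩ := hliminf ε hε
      set M : ℝ := max y.1 y.2 with hM_def
      have hM0 : 0 < M := lt_of_lt_of_le hy1 (le_max_left _ _)
      refine ⟨δ / M, by positivity, fun t ht htlt => ?_⟩
      have h1 : t * y.1 < δ := by
        calc t * y.1 ≤ t * M := mul_le_mul_of_nonneg_left (le_max_left _ _) ht.le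
        _ < δ := by rwa [← lt_div_iff₀ hM0]
      have h2 : t * y.2 < δ := by
        calc t * y.2 ≤ t * M := mul_le_mul_of_nonneg_left (le_max_right _ _) ht.le
        _ < δ := by rwa [← lt_div_iff₀ hM0]
      have h := hδ (t * y.1) (t * y.2) (mul_pos ht hy1) h1 (mul_pos ht hy2) h2
      have e : t • y = (t * y.1, t * y.2) := by
        ext <;> simp [smul_eq_mul]
      rw [hg_def]
      simp only
      rw [e]
      exact h
    have h := key2 γ₁ γ₂ hγ₁ hγ₁1 hγ₂ hsum g hgmix hglim γ hγ
    have e1 : g 1 = Ψ y := by simp [hg_def]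
    rw [e1] at h
    exact h
  intro γ hγ x hx1 hx2
  have h1 : γ * Ψ x ≤ Ψ (γ • x) := ray x hx1 hx2 γ hγ
  have h2 : (1 / γ) * Ψ (γ • x) ≤ Ψ ((1 / γ) • γ • x) := by
    apply ray (γ • x) (by simpa [smul_eq_mul] using mul_pos hγ hx1)
      (by simpa [smul_eq_mul] using mul_pos hγ hx2) (1 / γ) (by positivity)
  have e : (1 / γ) • γ • x = x := by
    rw [smul_smul, one_div, inv_mul_cancel₀ (ne_of_gt hγ), one_smul]
  rw [e] at h2
  have h3 : Ψ (γ • x) ≤ γ * Ψ x := by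
    have := mul_le_mul_of_nonneg_left h2 hγ.le
    rw [← mul_assoc, mul_one_div, div_self (ne_of_gt hγ), one_mul] at this
    linarith
  linarith
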